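/- If A is a G-homological Z_n-set in a topological space X and F ⊆ A is closed in X, then F is a G-homological Z_n-set in X. -/

import Mathlib

open CategoryTheory CategoryTheory.Limits AlgebraicTopology

/-- The functor sending a type `S` to the free `G`-coefficient group `S →₀ G`. -/
noncomputable def coeffFunctor (G : Type) [AddCommGroup G] : Type ⥤ AddCommGrpCat where
  obj S := AddCommGrpCat.of (S →₀ G)
  map f := AddCommGrpCat.ofHom (Finsupp.mapDomain.addMonoidHom f)
  map_id S := AddCommGrpCat.ext fun x => Finsupp.mapDomain_id
  map_comp f g := by
    refine AddCommGrpCat.ext fun x => ?_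
    exact Finsupp.mapDomain_comp (v := x) (f := ⇑(ConcreteCategory.hom f))
      (g := ⇑(ConcreteCategory.hom g))

/-- The singular chain complex of `X` with coefficients in `G`. -/
noncomputable def singularChains (G : Type) [AddCommGroup G] (X : Type) [TopologicalSpace X] :
    ChainComplex AddCommGrpCat ℕ :=
  (alternatingFaceMapComplex AddCommGrpCat).obj
    (TopCat.toSSet.obj (TopCat.of X) ⋙ coeffFunctor G)

/-- The chain map induced by a continuous map. -/
noncomputable def singularChainsMap (G : Type) [AddCommGroup G] {X Y : Type}
    [TopologicalSpace X] [TopologicalSpace Y] (f : C(X, Y)) :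
    singularChains G X ⟶ singularChains G Y :=
  (alternatingFaceMapComplex AddCommGrpCat).map
    (Functor.whiskerRight (TopCat.toSSet.map (TopCat.ofHom f : TopCat.of X ⟶ TopCat.of Y)) (coeffFunctor G))

lemma singularChainsMap_comp (G : Type) [AddCommGroup G] {X Y Z : Type}
    [TopologicalSpace X] [TopologicalSpace Y] [TopologicalSpace Z] (f : C(X, Y)) (g : C(Y, Z)) :
    singularChainsMap G (g.comp f) = singularChainsMap G f ≫ singularChainsMap G g := by
  first
    | (simp only [singularChainsMap, ← Functor.map_comp, ← Functor.whiskerRight_comp]; rfl)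
    | (unfold singularChainsMap
       erw [← Functor.map_comp, ← Functor.whiskerRight_comp, ← Functor.map_comp]
       rfl)

/-- Relative singular homology `H_k(U, U \ A; G)` of the pair of subspaces `(U, U \ A)` of `X`,
defined as the homology of the cokernel of the chain map induced by the inclusion
`U \ A ⊆ U`. -/
noncomputable def relHomology (G : Type) [AddCommGroup G] {X : Type} [TopologicalSpace X]
    (U A : Set X) (k : ℕ) : AddCommGrpCat :=
  (cokernel (singularChainsMap G
    (⟨Set.inclusion (Set.diff_subset : U \ A ⊆ U), continuous_inclusion _⟩ :
      C(↥(U \ A), ↥U)))).homology k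

/-- `A` is a `G`-homological `Z_n`-set in `X` : it is closed and `H_k(U, U \ A; G) = 0`
for all open `U ⊆ X` and all `k ≤ n`. -/
def IsHomologicalZSet (G : Type) [AddCommGroup G] {X : Type} [TopologicalSpace X]
    (n : ℕ) (A : Set X) : Prop :=
  IsClosed A ∧ ∀ U : Set X, IsOpen U → ∀ k : ℕ, k ≤ n → Subsingleton (relHomology G U A k)

/-! ### Auxiliary material -/

section AuxAb

/-- In `AddCommGrpCat`, a zero object has subsingleton carrier. -/
lemma AddCommGrpCat.subsingleton_of_isZero' {M : AddCommGrpCat} (h : IsZero M) : Subsingleton M := by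
  have h0 : (𝟙 M : M ⟶ M) = 0 := h.eq_of_src _ _
  refine ⟨fun a b => ?_⟩
  have ha : (𝟙 M : M ⟶ M) a = (0 : M ⟶ M) a := by rw [h0]
  have hb : (𝟙 M : M ⟶ M) b = (0 : M ⟶ M) b := by rw [h0]
  simpa using ha.trans hb.symm

/-- The target of an epimorphism out of a zero object is zero. -/
lemma isZero_of_epi_of_isZero {𝒜 : Type*} [Category 𝒜] [Abelian 𝒜] {M N : 𝒜}
    (φ : M ⟶ N) [Epi φ] (h : IsZero M) : IsZero N := by
  rw [IsZero.iff_id_eq_zero, ← cancel_epi φ]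
  simp [h.eq_of_src φ 0]

end AuxAb

section CokerTriple

open CategoryTheory.Abelian
open scoped Pseudoelement

variable {𝒜 : Type*} [Category 𝒜] [Abelian 𝒜]

lemma cokerTriple_zero {A B C : 𝒜} (f : A ⟶ B) (g : B ⟶ C) :
    cokernel.map f (f ≫ g) (𝟙 A) g (by simp) ≫
      cokernel.desc (f ≫ g) (cokernel.π g) (by simp) = 0 := by
  apply zero_of_epi_comp (cokernel.π f)
  simp

/-- For composable maps `f : A ⟶ B` and `g : B ⟶ C` with `g` mono, the sequence
`coker f ⟶ coker (f ≫ g) ⟶ coker g` is short exact. -/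
lemma cokerTriple_shortExact {A B C : 𝒜} (f : A ⟶ B) (g : B ⟶ C) [Mono g] :
    (ShortComplex.mk _ _ (cokerTriple_zero f g)).ShortExact := by
  have hπcomm : cokernel.π f ≫ cokernel.map f (f ≫ g) (𝟙 A) g (by simp)
      = g ≫ cokernel.π (f ≫ g) := by simp
  have hexfg : (ShortComplex.mk (f ≫ g) (cokernel.π (f ≫ g)) (cokernel.condition _)).Exact :=
    ShortComplex.exact_of_g_is_cokernel _ (cokernelIsCokernel _)
  have hexg : (ShortComplex.mk g (cokernel.π g) (cokernel.condition _)).Exact :=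
    ShortComplex.exact_of_g_is_cokernel _ (cokernelIsCokernel _)
  have hepi : Epi (cokernel.desc (f ≫ g) (cokernel.π g)
      (by simp : (f ≫ g) ≫ cokernel.π g = 0)) := by
    have h : Epi (cokernel.π (f ≫ g) ≫ cokernel.desc (f ≫ g) (cokernel.π g) (by simp)) := by
      rw [cokernel.π_desc]; infer_instance
    exact epi_of_epi (cokernel.π (f ≫ g)) _
  refine { exact := ?_, mono_f := ?_, epi_g := hepi }
  · apply Pseudoelement.exact_of_pseudo_exact
    intro b hb
    dsimp only [ShortComplex.mk] at b hb ⊢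
    obtain ⟨c, rfl⟩ := Pseudoelement.pseudo_surjective_of_epi (cokernel.π (f ≫ g)) b
    have hc : (cokernel.π g) c = 0 := by
      rw [← Pseudoelement.comp_apply, cokernel.π_desc] at hb
      exact hb
    obtain ⟨b', hb'⟩ := Pseudoelement.pseudo_exact_of_exact hexg _ hc
    refine ⟨(cokernel.π f) b', ?_⟩
    rw [← Pseudoelement.comp_apply, hπcomm, Pseudoelement.comp_apply, hb']
  · apply Pseudoelement.mono_of_zero_of_map_zero
    intro a ha
    obtain ⟨b, rfl⟩ := Pseudoelement.pseudo_surjective_of_epi (cokernel.π f) a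
    rw [← Pseudoelement.comp_apply, hπcomm, Pseudoelement.comp_apply] at ha
    obtain ⟨a', ha'⟩ := Pseudoelement.pseudo_exact_of_exact hexfg _ ha
    rw [Pseudoelement.comp_apply] at ha'
    have hfa : f a' = b := Pseudoelement.pseudo_injective_of_mono g ha'
    have hcond : f ≫ cokernel.π f = 0 := cokernel.condition f
    rw [← hfa, ← Pseudoelement.comp_apply, hcond]
    exact Pseudoelement.zero_apply _ _

end CokerTriple

section AuxChains

lemma coeffFunctor_map_def (G : Type) [AddCommGroup G] {S T : Type} (h : S ⟶ T) :
    (coeffFunctor G).map h = AddCommGrpCat.ofHom (Finsupp.mapDomain.addMonoidHom h) := rfl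

set_option maxHeartbeats 1000000 in
/-- The chain map induced by an injective continuous map is a monomorphism. -/
lemma singularChainsMap_mono (G : Type) [AddCommGroup G] {X Y : Type}
    [TopologicalSpace X] [TopologicalSpace Y] (f : C(X, Y)) (hf : Function.Injective f) :
    Mono (singularChainsMap G f) := by
  apply HomologicalComplex.mono_of_mono_f
  intro n
  unfold singularChainsMap
  simp only [alternatingFaceMapComplex_map_f, Functor.whiskerRight_app]
  rw [coeffFunctor_map_def]
  refine (AddCommGrpCat.mono_iff_injective _).mpr ?_
  have hinj : Function.Injective ((TopCat.toSSet.map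
      (TopCat.ofHom f)).app
      (Opposite.op (SimplexCategory.mk n))) := by
    intro σ τ h
    have h2 : σ.down ≫ TopCat.ofHom f = τ.down ≫ TopCat.ofHom f := congrArg ULift.down h
    have h3 : (σ.down : SimplexCategory.toTop.obj (SimplexCategory.mk n) ⟶ TopCat.of X)
        = τ.down := by
      refine ConcreteCategory.hom_ext (X := SimplexCategory.toTop.obj (SimplexCategory.mk n))
        (Y := TopCat.of X) _ _ fun x => ?_
      exact hf (ConcreteCategory.congr_hom h2 x)
    exact ULift.ext _ _ h3
  exact fun a b hab => Finsupp.mapDomain_injective hinj hab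

/-- Relative homology of the pair given by an inclusion of subspaces. -/
noncomputable def pairHom (G : Type) [AddCommGroup G] {X : Type} [TopologicalSpace X]
    {W U : Set X} (h : W ⊆ U) (k : ℕ) : AddCommGrpCat :=
  (cokernel (singularChainsMap G
    (⟨Set.inclusion h, continuous_inclusion h⟩ : C(↥W, ↥U)))).homology k

lemma relHomology_eq_pairHom (G : Type) [AddCommGroup G] {X : Type} [TopologicalSpace X]
    (U A : Set X) (k : ℕ) :
    relHomology G U A k = pairHom G (Set.diff_subset : U \ A ⊆ U) k := rfl

lemma pairHom_congr (G : Type) [AddCommGroup G] {X : Type} [TopologicalSpace X]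
    {W W' U : Set X} (e : W = W') (h : W ⊆ U) (h' : W' ⊆ U) (k : ℕ) :
    pairHom G h k = pairHom G h' k := by subst e; rfl

/-- The long exact homology sequence argument:
if `H_k(U,V)` vanishes and `H_{k-1}(W,V)` vanishes, then `H_k(U,W)` vanishes. -/
lemma pairHom_isZero (G : Type) [AddCommGroup G] {X : Type} [TopologicalSpace X]
    {V W U : Set X} (hVW : V ⊆ W) (hWU : W ⊆ U) (k : ℕ)
    (h2 : Subsingleton (pairHom G (hVW.trans hWU) k))
    (h1 : ∀ m, m + 1 = k → Subsingleton (pairHom G hVW m)) :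
    IsZero (pairHom G hWU k) := by
  set i₁ : C(↥V, ↥W) := ⟨Set.inclusion hVW, continuous_inclusion hVW⟩ with hi₁
  set i₂ : C(↥W, ↥U) := ⟨Set.inclusion hWU, continuous_inclusion hWU⟩ with hi₂
  have hfg : singularChainsMap G i₁ ≫ singularChainsMap G i₂
      = singularChainsMap G (⟨Set.inclusion (hVW.trans hWU),
          continuous_inclusion (hVW.trans hWU)⟩ : C(↥V, ↥U)) := by
    rw [← singularChainsMap_comp]
    rfl
  have hmono : Mono (singularChainsMap G i₂) :=
    singularChainsMap_mono G i₂ (Set.inclusion_injective hWU)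
  have hz2 : IsZero ((cokernel (singularChainsMap G i₁ ≫ singularChainsMap G i₂)).homology k) := by
    rw [hfg]
    exact @AddCommGrpCat.isZero_of_subsingleton _ h2
  have hSE := cokerTriple_shortExact (singularChainsMap G i₁) (singularChainsMap G i₂)
  set S := ShortComplex.mk _ _
    (cokerTriple_zero (singularChainsMap G i₁) (singularChainsMap G i₂)) with hS
  have hepiSg : Epi S.g := hSE.epi_g
  show IsZero (S.X₃.homology k)
  rcases k with _ | m
  · -- degree 0 : use that `homologyMap S.g 0` is epi
    have hrel0 : ∀ j, ¬ (ComplexShape.down ℕ).Rel 0 j := fun j h => Nat.succ_ne_zero j h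
    have hiso : ∀ (K : HomologicalComplex AddCommGrpCat (ComplexShape.down ℕ)),
        IsIso (K.homologyι 0) := fun K =>
      K.isIso_homologyι 0 ((ComplexShape.down ℕ).next 0) rfl
        (K.shape _ _ (hrel0 _))
    have he1 : Epi (S.g.f 0) := inferInstance
    have he2 : Epi (HomologicalComplex.opcyclesMap S.g 0) := inferInstance
    have hnat := HomologicalComplex.homologyι_naturality S.g 0
    haveI hiso2 := hiso S.X₂
    haveI hiso3 := hiso S.X₃
    have hepiH : Epi (HomologicalComplex.homologyMap S.g 0) := by
      have heq : HomologicalComplex.homologyMap S.g 0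
          = (S.X₂.homologyι 0 ≫ HomologicalComplex.opcyclesMap S.g 0)
            ≫ inv (S.X₃.homologyι 0) := by
        rw [IsIso.eq_comp_inv, hnat]
      rw [heq]
      exact epi_comp _ _
    exact isZero_of_epi_of_isZero (HomologicalComplex.homologyMap S.g 0) hz2
  · -- degree `m+1` : long exact sequence
    have hij : (ComplexShape.down ℕ).Rel (m + 1) m := rfl
    have hz1 : IsZero (S.X₁.homology m) := by
      show IsZero ((cokernel (singularChainsMap G i₁)).homology m)
      exact @AddCommGrpCat.isZero_of_subsingleton _ (h1 m rfl)
    have hex := hSE.homology_exact₃ (m + 1) m hij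
    exact hex.isZero_X₂ (hz2.eq_of_src _ _) (hz1.eq_of_tgt _ _)

end AuxChains

/-- A closed subset of a `G`-homological `Z_n`-set is a `G`-homological `Z_n`-set. -/
theorem stmt5 (G : Type) [AddCommGroup G] {X : Type} [TopologicalSpace X] (n : ℕ)
    (A F : Set X) (hA : IsHomologicalZSet G n A) (hF : IsClosed F) (hFA : F ⊆ A) :
    IsHomologicalZSet G n F := by
  refine ⟨hF, fun U hU k hk => ?_⟩
  have hUAW : U \ A ⊆ U \ F := fun x hx => ⟨hx.1, fun hxF => hx.2 (hFA hxF)⟩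
  rw [relHomology_eq_pairHom]
  refine AddCommGrpCat.subsingleton_of_isZero'
    (pairHom_isZero G hUAW Set.diff_subset k ?_ ?_)
  · have h := hA.2 U hU k hk
    rw [relHomology_eq_pairHom] at h
    exact h
  · intro m hm
    have hopen : IsOpen (U \ F) := hU.sdiff hF
    have h := hA.2 (U \ F) hopen m (by omega)
    rw [relHomology_eq_pairHom,
      pairHom_congr G (show (U \ F) \ A = U \ A by
        ext x
        simp only [Set.mem_diff]
        exact ⟨fun h => ⟨h.1.1, h.2⟩, fun h => ⟨⟨h.1, fun hf => h.2 (hFA hf)⟩, h.2⟩⟩)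
      _ hUAW] at h
    exact h
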